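/- Let P, Q be positive definite real symmetric n×n matrices. Then tr[P·(log P − log Q) − P + Q] ≥ 0, with equality if and only if P = Q. -/

import Mathlib

open Filter Topology Matrix

/-- Matrix power of a Hermitian (symmetric) real matrix via spectral decomposition. -/
noncomputable def mpow {m : ℕ} (A : Matrix (Fin m) (Fin m) ℝ) (c : ℝ) :
    Matrix (Fin m) (Fin m) ℝ :=
  if hA : A.IsHermitian then
    (hA.eigenvectorUnitary : Matrix (Fin m) (Fin m) ℝ) *
      Matrix.diagonal (fun i => hA.eigenvalues i ^ c) *
      star (hA.eigenvectorUnitary : Matrix (Fin m) (Fin m) ℝ)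
  else 0

/-- Matrix logarithm of a Hermitian (symmetric) real matrix via spectral decomposition. -/
noncomputable def mlog {m : ℕ} (A : Matrix (Fin m) (Fin m) ℝ) :
    Matrix (Fin m) (Fin m) ℝ :=
  if hA : A.IsHermitian then
    (hA.eigenvectorUnitary : Matrix (Fin m) (Fin m) ℝ) *
      Matrix.diagonal (fun i => Real.log (hA.eigenvalues i)) *
      star (hA.eigenvectorUnitary : Matrix (Fin m) (Fin m) ℝ)
  else 0

lemma klein_scalar {x y : ℝ} (hx : 0 < x) (hy : 0 < y) :
    0 ≤ x * (Real.log x - Real.log y) - x + y ∧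
      (x * (Real.log x - Real.log y) - x + y = 0 ↔ x = y) := by
  have hd : 0 < y / x := div_pos hy hx
  have hle : Real.log (y / x) ≤ y / x - 1 := Real.log_le_sub_one_of_pos hd
  have hlog : Real.log (y / x) = Real.log y - Real.log x := Real.log_div hy.ne' hx.ne'
  have key : x * (Real.log x - Real.log y) - x + y
      = x * ((y / x - 1) - Real.log (y / x)) := by
    rw [hlog]; field_simp; ring
  constructor
  · rw [key]; exact mul_nonneg hx.le (by linarith)
  · constructor
    · intro h
      by_contra hne
      have hne' : y / x ≠ 1 := by
        intro h1; exact hne ((div_eq_one_iff_eq hx.ne').mp h1).symm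
      have hlt : Real.log (y / x) < y / x - 1 := Real.log_lt_sub_one_of_pos hd hne'
      have : 0 < x * ((y / x - 1) - Real.log (y / x)) := mul_pos hx (by linarith)
      rw [key] at h; linarith
    · rintro rfl; ring

lemma trace_diag_conj {n : ℕ} (d e : Fin n → ℝ) (M : Matrix (Fin n) (Fin n) ℝ) :
    (diagonal d * (M * diagonal e * star M)).trace
      = ∑ i, ∑ j, (M i j)^2 * (d i * e j) := by
  have hX : ∀ i, (M * diagonal e * star M) i i = ∑ j, M i j * e j * M i j := by
    intro i
    rw [Matrix.mul_apply]
    apply Finset.sum_congr rfl; intro j _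
    rw [Matrix.mul_diagonal, Matrix.star_apply, star_trivial]
  simp only [Matrix.trace, Matrix.diag, Matrix.diagonal_mul, hX, Finset.mul_sum]
  apply Finset.sum_congr rfl; intro i _
  apply Finset.sum_congr rfl; intro j _
  ring

lemma trace_conj_pair {n : ℕ} (U V : Matrix (Fin n) (Fin n) ℝ) (d e : Fin n → ℝ) :
    (U * diagonal d * star U * (V * diagonal e * star V)).trace
      = ∑ i, ∑ j, ((star U * V) i j)^2 * (d i * e j) := by
  have h0 : U * diagonal d * star U * (V * diagonal e * star V)
      = U * (diagonal d * (star U * (V * (diagonal e * star V)))) := by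
    simp only [mul_assoc]
  rw [h0, Matrix.trace_mul_comm]
  have h1 : diagonal d * (star U * (V * (diagonal e * star V))) * U
      = diagonal d * ((star U * V) * diagonal e * star (star U * V)) := by
    rw [Matrix.star_mul, star_star]
    simp only [mul_assoc]
  rw [h1, trace_diag_conj]

theorem vonNeumann_relative_entropy_nonneg {n : ℕ}
    (P Q : Matrix (Fin n) (Fin n) ℝ) (hP : P.PosDef) (hQ : Q.PosDef) :
    0 ≤ (P * (mlog P - mlog Q) - P + Q).trace ∧
      ((P * (mlog P - mlog Q) - P + Q).trace = 0 ↔ P = Q) := by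
  have hP' := hP.isHermitian
  have hQ' := hQ.isHermitian
  set U : Matrix (Fin n) (Fin n) ℝ := (hP'.eigenvectorUnitary : Matrix (Fin n) (Fin n) ℝ) with hUdef
  set V : Matrix (Fin n) (Fin n) ℝ := (hQ'.eigenvectorUnitary : Matrix (Fin n) (Fin n) ℝ) with hVdef
  set lam := hP'.eigenvalues with hlamdef
  set mu := hQ'.eigenvalues with hmudef
  set M := star U * V with hMdef
  have hU1 : U * star U = 1 := mem_unitaryGroup_iff.mp hP'.eigenvectorUnitary.2
  have hU2 : star U * U = 1 := mem_unitaryGroup_iff'.mp hP'.eigenvectorUnitary.2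
  have hV1 : V * star V = 1 := mem_unitaryGroup_iff.mp hQ'.eigenvectorUnitary.2
  have hV2 : star V * V = 1 := mem_unitaryGroup_iff'.mp hQ'.eigenvectorUnitary.2
  have hlampos : ∀ i, 0 < lam i := fun i => hP.eigenvalues_pos i
  have hmupos : ∀ j, 0 < mu j := fun j => hQ.eigenvalues_pos j
  have hspecP : P = U * diagonal lam * star U := by
    conv_lhs => rw [hP'.spectral_theorem]
    norm_num
    rfl
  have hspecQ : Q = V * diagonal mu * star V := by
    conv_lhs => rw [hQ'.spectral_theorem]
    norm_num
    rfl
  have hmlogP : mlog P = U * diagonal (fun i => Real.log (lam i)) * star U := by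
    rw [mlog, dif_pos hP']
  have hmlogQ : mlog Q = V * diagonal (fun j => Real.log (mu j)) * star V := by
    rw [mlog, dif_pos hQ']
  -- row and column sums of M squared
  have hMrow : ∀ i, ∑ j, (M i j)^2 = 1 := by
    have hMM : M * star M = 1 := by
      rw [hMdef, Matrix.star_mul, star_star]
      calc star U * V * (star V * U) = star U * (V * star V) * U := by
            simp only [mul_assoc]
        _ = 1 := by rw [hV1, mul_one, hU2]
    intro i
    have := congrArg (fun A : Matrix (Fin n) (Fin n) ℝ => A i i) hMM
    simpa [Matrix.mul_apply, Matrix.star_apply, Matrix.one_apply, pow_two] using this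
  have hMcol : ∀ j, ∑ i, (M i j)^2 = 1 := by
    have hMM : star M * M = 1 := by
      rw [hMdef, Matrix.star_mul, star_star]
      calc star V * U * (star U * V) = star V * (U * star U) * V := by
            simp only [mul_assoc]
        _ = 1 := by rw [hU1, mul_one, hV2]
    intro j
    have := congrArg (fun A : Matrix (Fin n) (Fin n) ℝ => A j j) hMM
    simpa [Matrix.mul_apply, Matrix.star_apply, Matrix.one_apply, pow_two] using this
  -- trace pieces
  have h1 : (P * mlog P).trace = ∑ i, lam i * Real.log (lam i) := by
    rw [hmlogP, hspecP, trace_conj_pair, hU2]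
    apply Finset.sum_congr rfl; intro i _
    simp [Matrix.one_apply, ite_pow]
  have h2 : (P * mlog Q).trace = ∑ i, ∑ j, (M i j)^2 * (lam i * Real.log (mu j)) := by
    rw [hspecP, hmlogQ, trace_conj_pair]
  have h3 : P.trace = ∑ i, lam i := by
    rw [hspecP, Matrix.trace_mul_comm]
    have : star U * (U * diagonal lam) = diagonal lam := by
      rw [← mul_assoc, hU2, one_mul]
    rw [this, Matrix.trace_diagonal]
  have h4 : Q.trace = ∑ j, mu j := by
    rw [hspecQ, Matrix.trace_mul_comm]
    have : star V * (V * diagonal mu) = diagonal mu := by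
      rw [← mul_assoc, hV2, one_mul]
    rw [this, Matrix.trace_diagonal]
  -- the key identity
  have key : (P * (mlog P - mlog Q) - P + Q).trace
      = ∑ i, ∑ j, (M i j)^2 *
          (lam i * (Real.log (lam i) - Real.log (mu j)) - lam i + mu j) := by
    rw [Matrix.trace_add, Matrix.trace_sub, mul_sub, Matrix.trace_sub, h1, h2, h3, h4]
    have expand : ∀ i j, (M i j)^2 *
          (lam i * (Real.log (lam i) - Real.log (mu j)) - lam i + mu j)
        = (M i j)^2 * (lam i * Real.log (lam i))
          - (M i j)^2 * (lam i * Real.log (mu j))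
          - (M i j)^2 * lam i + (M i j)^2 * mu j := by
      intro i j; ring
    simp only [expand, Finset.sum_add_distrib, Finset.sum_sub_distrib]
    have eA : ∑ i, ∑ j, (M i j)^2 * (lam i * Real.log (lam i))
        = ∑ i, lam i * Real.log (lam i) := by
      apply Finset.sum_congr rfl; intro i _
      rw [← Finset.sum_mul, hMrow i, one_mul]
    have eB : ∑ i, ∑ j, (M i j)^2 * lam i = ∑ i, lam i := by
      apply Finset.sum_congr rfl; intro i _
      rw [← Finset.sum_mul, hMrow i, one_mul]
    have eC : ∑ i, ∑ j, (M i j)^2 * mu j = ∑ j, mu j := by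
      rw [Finset.sum_comm]
      apply Finset.sum_congr rfl; intro j _
      rw [← Finset.sum_mul, hMcol j, one_mul]
    rw [eA, eB, eC]
  constructor
  · rw [key]
    apply Finset.sum_nonneg; intro i _
    apply Finset.sum_nonneg; intro j _
    exact mul_nonneg (sq_nonneg _) (klein_scalar (hlampos i) (hmupos j)).1
  · constructor
    · intro h
      rw [key] at h
      have hterm : ∀ i ∈ Finset.univ, ∀ j ∈ Finset.univ, (M i j)^2 *
          (lam i * (Real.log (lam i) - Real.log (mu j)) - lam i + mu j) = 0 := by
        have houter := (Finset.sum_eq_zero_iff_of_nonneg (fun i _ =>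
          Finset.sum_nonneg (fun j _ =>
            mul_nonneg (sq_nonneg _) (klein_scalar (hlampos i) (hmupos j)).1))).mp h
        intro i hi
        exact (Finset.sum_eq_zero_iff_of_nonneg (fun j _ =>
          mul_nonneg (sq_nonneg _) (klein_scalar (hlampos i) (hmupos j)).1)).mp (houter i hi)
      have hDM : diagonal lam * M = M * diagonal mu := by
        ext i j
        rw [Matrix.diagonal_mul, Matrix.mul_diagonal]
        rcases eq_or_ne (M i j) 0 with h0 | h0
        · rw [h0, mul_zero, zero_mul]
        · have hz := hterm i (Finset.mem_univ i) j (Finset.mem_univ j)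
          have h2z : lam i * (Real.log (lam i) - Real.log (mu j)) - lam i + mu j = 0 := by
            rcases mul_eq_zero.mp hz with hc | hc
            · exact absurd hc (pow_ne_zero 2 h0)
            · exact hc
          have : lam i = mu j := (klein_scalar (hlampos i) (hmupos j)).2.mp h2z
          rw [this, mul_comm]
      have e1 : P = U * (diagonal lam * M) * star V := by
        rw [hspecP, hMdef]
        calc U * diagonal lam * star U
            = U * diagonal lam * (star U * (V * star V)) := by rw [hV1, mul_one]
          _ = U * (diagonal lam * (star U * V)) * star V := by simp only [mul_assoc]
      rw [e1, hDM, hMdef]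
      have e2 : U * (star U * V * diagonal mu) = V * diagonal mu := by
        simp only [← mul_assoc]
        rw [hU1, one_mul]
      rw [← mul_assoc] at e2 ⊢
      rw [e2]
      exact hspecQ.symm
    · rintro rfl
      simp [sub_self, mul_zero]
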